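/- Let θ, a : ℝⁿ → ℝ be continuous, let θ̄ ∈ ℝ, and define h : ℝⁿ → ℝ by h(x) = a(x) if θ(x) < θ̄ and h(x) = θ̄ − θ(x) otherwise. Let x₀ satisfy θ(x₀) = θ̄ (so h(x₀) = 0) and suppose x₀ lies in the closure of {x : θ(x) < θ̄}. Then the Filippov regularization of h at x₀ is the segment joining 0 and a(x₀): g(x₀) = {u·a(x₀) + (1−u)·0 : u ∈ [0,1]}. -/

import Mathlib

/-- The Filippov regularization of a scalar-valued `f` at `x`:
`g(x) = ⋂_{γ>0} closedConvexHull (f '' B(x,γ))`. -/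
noncomputable def filippov {n : ℕ}
    (f : EuclideanSpace ℝ (Fin n) → ℝ)
    (x : EuclideanSpace ℝ (Fin n)) : Set ℝ :=
  ⋂ γ > (0 : ℝ), closedConvexHull ℝ (f '' Metric.ball x γ)

/-- At a boundary point `x₀` with `θ(x₀) = θ̄` lying in the closure of
`{θ < θ̄}`, the Filippov regularization of the piecewise map
`h = a` on `{θ < θ̄}`, `h = θ̄ - θ` otherwise, is the segment joining
`0` and `a(x₀)`. -/
theorem filippov_piecewise_boundary {n : ℕ}
    (θ a : EuclideanSpace ℝ (Fin n) → ℝ) (θbar : ℝ)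
    (hθ : Continuous θ) (ha : Continuous a)
    (h : EuclideanSpace ℝ (Fin n) → ℝ)
    (hdef : ∀ x, h x = if θ x < θbar then a x else θbar - θ x)
    (x₀ : EuclideanSpace ℝ (Fin n))
    (hx₀ : θ x₀ = θbar)
    (hcl : x₀ ∈ closure {x | θ x < θbar}) :
    filippov h x₀ = {y : ℝ | ∃ u ∈ Set.Icc (0 : ℝ) 1, y = u * a x₀ + (1 - u) * 0} := by
  set c := a x₀ with hc
  have hx0' : ¬ θ x₀ < θbar := by simp [hx₀]
  have hh0 : h x₀ = 0 := by rw [hdef]; simp [hx0', hx₀]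
  have hseg : {y : ℝ | ∃ u ∈ Set.Icc (0:ℝ) 1, y = u * c + (1-u)*0}
      = Set.Icc (min 0 c) (max 0 c) := by
    ext y
    simp only [Set.mem_setOf_eq, Set.mem_Icc]
    constructor
    · rintro ⟨u, ⟨hu0, hu1⟩, rfl⟩
      constructor
      · rcases le_total 0 c with hpos | hneg
        · have : (0:ℝ) ≤ u * c := mul_nonneg hu0 hpos
          have := min_le_left (0:ℝ) c
          nlinarith
        · have h1 : u * c ≥ c := by nlinarith
          have := min_le_right (0:ℝ) c
          nlinarith
      · rcases le_total 0 c with hpos | hneg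
        · have h1 : u * c ≤ c := by nlinarith
          have := le_max_right (0:ℝ) c
          nlinarith
        · have : u * c ≤ 0 := mul_nonpos_of_nonneg_of_nonpos hu0 hneg
          have := le_max_left (0:ℝ) c
          nlinarith
    · rintro ⟨hy1, hy2⟩
      rcases eq_or_ne c 0 with hc0 | hc0
      · refine ⟨0, ⟨le_refl _, zero_le_one⟩, ?_⟩
        rw [hc0] at hy1 hy2
        simp only [min_self, max_self] at hy1 hy2
        have : y = 0 := le_antisymm (by simpa using hy2) (by simpa using hy1)
        simp [this]
      · refine ⟨y / c, ⟨?_, ?_⟩, by field_simp; ring⟩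
        · rcases lt_or_gt_of_ne hc0 with hneg | hpos
          · have : y ≤ 0 := le_trans hy2 (by simp [hneg.le])
            rw [le_div_iff_of_neg hneg]; linarith
          · have : 0 ≤ y := le_trans (by simp [hpos.le]) hy1
            exact div_nonneg this hpos.le
        · rcases lt_or_gt_of_ne hc0 with hneg | hpos
          · have : c ≤ y := le_trans (by simp [hneg.le]) hy1
            rw [div_le_iff_of_neg hneg]; linarith
          · have : y ≤ c := le_trans hy2 (by simp [hpos.le])
            exact div_le_one_of_le₀ this hpos.le
  rw [hseg]
  apply Set.Subset.antisymm
  · -- filippov ⊆ Icc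
    intro y hy
    have key : ∀ ε > (0:ℝ), y ∈ Set.Icc (min 0 c - ε) (max 0 c + ε) := by
      intro ε hε
      obtain ⟨γ₁, hγ₁, hA⟩ := Metric.continuous_iff.mp ha x₀ ε hε
      obtain ⟨γ₂, hγ₂, hT⟩ := Metric.continuous_iff.mp hθ x₀ ε hε
      set γ := min γ₁ γ₂ with hγdef
      have hγ : (0:ℝ) < γ := lt_min hγ₁ hγ₂
      have hy' : y ∈ closedConvexHull ℝ (h '' Metric.ball x₀ γ) := by
        have := Set.mem_iInter₂.mp hy γ hγ
        exact this
      have hsub : h '' Metric.ball x₀ γ ⊆ Set.Icc (min 0 c - ε) (max 0 c + ε) := by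
        rintro _ ⟨z, hz, rfl⟩
        rw [Metric.mem_ball] at hz
        have haz := hA z (lt_of_lt_of_le hz (min_le_left _ _))
        have hθz := hT z (lt_of_lt_of_le hz (min_le_right _ _))
        rw [Real.dist_eq] at haz hθz
        rw [hx₀] at hθz
        rw [abs_lt] at haz hθz
        rw [hdef]
        have hmin1 := min_le_left (0:ℝ) c
        have hmin2 := min_le_right (0:ℝ) c
        have hmax1 := le_max_left (0:ℝ) c
        have hmax2 := le_max_right (0:ℝ) c
        split_ifs
        · constructor <;> [linarith [haz.1]; linarith [haz.2]]
        · constructor <;> [linarith [hθz.1]; linarith [hθz.2]]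
      have hIcc : closedConvexHull ℝ (h '' Metric.ball x₀ γ)
          ⊆ Set.Icc (min 0 c - ε) (max 0 c + ε) :=
        closedConvexHull_min hsub (convex_Icc _ _) isClosed_Icc
      exact hIcc hy'
    constructor
    · have : ∀ ε > (0:ℝ), min 0 c ≤ y + ε := fun ε hε => by
        have := (key ε hε).1; linarith
      exact le_of_forall_pos_le_add this
    · have : ∀ ε > (0:ℝ), y ≤ max 0 c + ε := fun ε hε => (key ε hε).2
      exact le_of_forall_pos_le_add this
  · -- Icc ⊆ filippov
    intro y hy
    rw [filippov, Set.mem_iInter₂]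
    intro γ hγ
    have h0mem : (0:ℝ) ∈ closedConvexHull ℝ (h '' Metric.ball x₀ γ) := by
      apply subset_closedConvexHull
      exact ⟨x₀, Metric.mem_ball_self hγ, hh0⟩
    have hcmem : c ∈ closedConvexHull ℝ (h '' Metric.ball x₀ γ) := by
      apply closure_subset_closedConvexHull
      rw [Metric.mem_closure_iff]
      intro ε hε
      obtain ⟨δ, hδ, hA⟩ := Metric.continuous_iff.mp ha x₀ ε hε
      obtain ⟨z, hz, hzd⟩ := Metric.mem_closure_iff.mp hcl (min γ δ) (lt_min hγ hδ)
      refine ⟨h z, ⟨z, ?_, rfl⟩, ?_⟩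
      · rw [Metric.mem_ball, dist_comm]
        exact lt_of_lt_of_le hzd (min_le_left _ _)
      · have : dist z x₀ < δ := by
          rw [dist_comm]; exact lt_of_lt_of_le hzd (min_le_right _ _)
        have haz := hA z this
        rw [hdef, if_pos (show θ z < θbar from hz)]
        rw [dist_comm] at haz
        exact haz
    have hsub : Set.Icc (min 0 c) (max 0 c) ⊆ closedConvexHull ℝ (h '' Metric.ball x₀ γ) := by
      intro w hw
      have hseg' : w ∈ segment ℝ (0:ℝ) c := by
        rw [segment_eq_uIcc, Set.uIcc, Set.mem_Icc]
        exact ⟨by simpa using hw.1, by simpa using hw.2⟩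
      exact convex_closedConvexHull.segment_subset h0mem hcmem hseg'
    exact hsub hy
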